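/- Let m, n, d be natural numbers with 0 < d < min(m,n), and set c = m+n-2d-1. Let H(m,n,d) be the d×(d+1) matrix with entries C(c, m-i-j) for 1 ≤ i ≤ d, 0 ≤ j ≤ d, and let q_0(m,n,d) be the determinant of the square submatrix obtained by deleting the first column (columns j=1,...,d). Then q_0(m,n,d) = (-1)^(d(d-1)/2) · ∏_{i=1}^{d} ((i-1)! (c+i-1)!) / ((m-i-1)! (n-i)!). -/

import Mathlib

open Finset

/-- Binomial coefficient `C(c, k)` with integer lower index, zero when `k < 0`
(and automatically zero when `k > c`). -/
def binomZ (c : ℕ) (k : ℤ) : ℤ := if 0 ≤ k then (c.choose k.toNat : ℤ) else 0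

/-- The `d × (d+1)` binomial Hankel matrix `H(m,n,d)` with entries
`C(m+n-2d-1, m-i-j)` for `1 ≤ i ≤ d`, `0 ≤ j ≤ d`. -/
def hankelH (m n d : ℕ) : Matrix (Fin d) (Fin (d + 1)) ℤ :=
  Matrix.of fun i j => binomZ (m + n - 2 * d - 1) ((m : ℤ) - ((i : ℕ) + 1) - (j : ℕ))

/-- `q_j(m,n,d)`: the maximal minor of `H(m,n,d)` obtained by deleting the
`(j+1)`-th column (columns are indexed `0,…,d`). -/
def qMinor (m n d : ℕ) (j : Fin (d + 1)) : ℤ :=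
  ((hankelH m n d).submatrix id j.succAbove).det

section Aux

open Matrix


variable {R : Type*} [CommRing R] {n : ℕ}

omit [CommRing R] in
private lemma updRow_comm [Zero R] {N : Type*} [DecidableEq N] {i₁ i₂ : N} (h : i₁ ≠ i₂)
    (A : Matrix N N R) (v₁ v₂ : N → R) :
    (A.updateRow i₁ v₁).updateRow i₂ v₂ = (A.updateRow i₂ v₂).updateRow i₁ v₁ := by
  ext i j
  rcases eq_or_ne i i₁ with rfl | h1
  · simp [Matrix.updateRow_apply, h]
  · rcases eq_or_ne i i₂ with rfl | h2
    · simp [Matrix.updateRow_apply, h1]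
    · simp [Matrix.updateRow_apply, h1, h2]

private lemma det_updateRow_expand {N : Type*} [DecidableEq N] [Fintype N]
    (A : Matrix N N R) (j : N) (v : N → R) :
    (A.updateRow j v).det = ∑ k, v k * (A.updateRow j (Pi.single k 1)).det := by
  have hv : v = ∑ k, (v k • (Pi.single k 1 : N → R)) := by
    funext t
    simp [Pi.single_apply, mul_comm]
  conv_lhs => rw [hv]
  have h1 : (A.updateRow j (∑ k, (v k • (Pi.single k 1 : N → R)))).det
      = (Matrix.detRowAlternating (R := R) (n := N))
          (Function.update (A : N → N → R) j (∑ k, (v k • (Pi.single k 1 : N → R)))) := rfl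
  rw [h1]
  refine (AlternatingMap.map_update_sum _ _ _ _ _).trans ?_
  refine Finset.sum_congr rfl fun k _ => ?_
  have h2 : (Matrix.detRowAlternating (R := R) (n := N))
      (Function.update (A : N → N → R) j ((v k • (Pi.single k 1 : N → R))))
      = (A.updateRow j (v k • (Pi.single k 1 : N → R))).det := rfl
  rw [h2, Matrix.det_updateRow_smul]

private lemma fin_trichotomy (k : Fin (n + 2)) :
    k = 0 ∨ k = Fin.last (n + 1) ∨ ∃ j : Fin n, k = (j.castSucc).succ := by
  rcases Fin.eq_zero_or_eq_succ k with rfl | ⟨j, rfl⟩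
  · exact Or.inl rfl
  · rcases Fin.eq_castSucc_or_eq_last j with ⟨j', rfl⟩ | rfl
    · exact Or.inr (Or.inr ⟨j', rfl⟩)
    · exact Or.inr (Or.inl (by rw [Fin.succ_last]))

private lemma zero_ne_last : (0 : Fin (n + 2)) ≠ Fin.last (n + 1) := by
  simp [Fin.ext_iff]

private lemma mid_ne_zero (j : Fin n) : ((j.castSucc).succ : Fin (n + 2)) ≠ 0 :=
  Fin.succ_ne_zero _

private lemma mid_ne_last (j : Fin n) : ((j.castSucc).succ : Fin (n + 2)) ≠ Fin.last (n + 1) := by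
  rw [Fin.succ_castSucc]
  exact (Fin.castSucc_lt_last _).ne

private def cornerE (k l : Fin (n + 2)) : Matrix (Fin (n + 2)) (Fin (n + 2)) R :=
  ((1 : Matrix (Fin (n + 2)) (Fin (n + 2)) R).updateRow 0 (Pi.single k 1)).updateRow
    (Fin.last (n + 1)) (Pi.single l 1)

private lemma cornerE_row_zero (k l : Fin (n + 2)) :
    (cornerE (R := R) k l) 0 = Pi.single k 1 := by
  rw [cornerE, Matrix.updateRow_ne zero_ne_last, Matrix.updateRow_self]

private lemma cornerE_row_last (k l : Fin (n + 2)) :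
    (cornerE (R := R) k l) (Fin.last (n + 1)) = Pi.single l 1 := by
  rw [cornerE, Matrix.updateRow_self]

private lemma cornerE_row_mid (k l : Fin (n + 2)) (j : Fin n) :
    (cornerE (R := R) k l) ((j.castSucc).succ) = Pi.single ((j.castSucc).succ : Fin (n+2)) 1 := by
  rw [cornerE, Matrix.updateRow_ne (mid_ne_last j), Matrix.updateRow_ne (mid_ne_zero j)]
  funext t
  simp [Matrix.one_apply, Pi.single_apply, eq_comm]

private lemma cornerE_det (k l : Fin (n + 2)) :
    (cornerE (R := R) k l).det =
      (if k = 0 then (if l = Fin.last (n + 1) then (1 : R) else 0) else 0) +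
      (if k = Fin.last (n + 1) then (if l = 0 then (-1 : R) else 0) else 0) := by
  rcases fin_trichotomy k with rfl | rfl | ⟨jk, rfl⟩
  · rcases fin_trichotomy l with rfl | rfl | ⟨jl, rfl⟩
    · rw [Matrix.det_zero_of_row_eq zero_ne_last
        ((cornerE_row_zero 0 0).trans (cornerE_row_last 0 0).symm)]
      simp [zero_ne_last.symm]
    · have h1 : (cornerE (R := R) 0 (Fin.last (n+1))) = 1 := by
        ext i j
        rcases fin_trichotomy i with rfl | rfl | ⟨ji, rfl⟩
        · rw [cornerE_row_zero]
          simp [Matrix.one_apply, Pi.single_apply, eq_comm]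
        · rw [cornerE_row_last]
          simp [Matrix.one_apply, Pi.single_apply, eq_comm]
        · rw [cornerE_row_mid]
          simp [Matrix.one_apply, Pi.single_apply, eq_comm]
      rw [h1, Matrix.det_one]
      simp [zero_ne_last.symm]
    · rw [Matrix.det_zero_of_row_eq (mid_ne_last jl).symm
        ((cornerE_row_last _ _).trans (cornerE_row_mid _ _ jl).symm)]
      simp [zero_ne_last.symm, (mid_ne_last jl), (mid_ne_zero jl)]
  · rcases fin_trichotomy l with rfl | rfl | ⟨jl, rfl⟩
    · have h1 : (cornerE (R := R) (Fin.last (n+1)) 0) =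
          ((Equiv.swap (0 : Fin (n+2)) (Fin.last (n+1))).permMatrix R) := by
        ext i j
        rcases fin_trichotomy i with rfl | rfl | ⟨ji, rfl⟩
        · rw [cornerE_row_zero]
          simp [Equiv.Perm.permMatrix, PEquiv.toMatrix_apply, Equiv.toPEquiv_apply,
            Pi.single_apply, Equiv.swap_apply_left, eq_comm]
        · rw [cornerE_row_last]
          simp [Equiv.Perm.permMatrix, PEquiv.toMatrix_apply, Equiv.toPEquiv_apply,
            Pi.single_apply, Equiv.swap_apply_right, eq_comm]
        · rw [cornerE_row_mid]
          rw [Equiv.Perm.permMatrix]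
          simp [PEquiv.toMatrix_apply, Equiv.toPEquiv_apply, Pi.single_apply,
            Equiv.swap_apply_of_ne_of_ne (mid_ne_zero ji) (mid_ne_last ji), eq_comm]
      rw [h1, Matrix.det_permutation, Equiv.Perm.sign_swap zero_ne_last]
      simp [zero_ne_last.symm]
    · rw [Matrix.det_zero_of_row_eq zero_ne_last
        ((cornerE_row_zero _ _).trans (cornerE_row_last _ _).symm)]
      simp [zero_ne_last.symm]
    · rw [Matrix.det_zero_of_row_eq (mid_ne_last jl).symm
        ((cornerE_row_last _ _).trans (cornerE_row_mid _ _ jl).symm)]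
      simp [zero_ne_last.symm, mid_ne_zero jl]
  · rw [Matrix.det_zero_of_row_eq (mid_ne_zero jk).symm
      ((cornerE_row_mid _ _ jk).trans (cornerE_row_zero _ _).symm).symm]
    simp [mid_ne_zero jk, mid_ne_last jk]

private lemma det_corner_rows (u w : Fin (n + 2) → R) :
    (((1 : Matrix (Fin (n+2)) (Fin (n+2)) R).updateRow 0 u).updateRow (Fin.last (n + 1)) w).det
      = u 0 * w (Fin.last (n + 1)) - u (Fin.last (n + 1)) * w 0 := by
  rw [det_updateRow_expand]
  have h1 : ∀ l, ((1 : Matrix (Fin (n+2)) (Fin (n+2)) R).updateRow 0 u).updateRow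
      (Fin.last (n+1)) (Pi.single l 1)
      = (((1 : Matrix (Fin (n+2)) (Fin (n+2)) R).updateRow (Fin.last (n+1))
          (Pi.single l 1)).updateRow 0 u) :=
    fun l => updRow_comm zero_ne_last _ _ _
  have h2 : ∀ k l, (((1 : Matrix (Fin (n+2)) (Fin (n+2)) R).updateRow (Fin.last (n+1))
      ((Pi.single l 1 : Fin (n+2) → R))).updateRow 0 ((Pi.single k 1 : Fin (n+2) → R))).det
      = (cornerE (R := R) k l).det := by
    intro k l
    rw [updRow_comm zero_ne_last.symm]
    rfl
  have step : ∀ l : Fin (n+2),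
      (((1 : Matrix (Fin (n+2)) (Fin (n+2)) R).updateRow 0 u).updateRow
        (Fin.last (n+1)) (Pi.single l 1)).det = ∑ k, u k * (cornerE (R := R) k l).det := by
    intro l
    rw [h1 l, det_updateRow_expand]
    exact Finset.sum_congr rfl fun k _ => by rw [h2 k l]
  simp_rw [step, cornerE_det]
  simp only [mul_add, Finset.sum_add_distrib, Finset.mul_sum, mul_ite, ite_mul, mul_zero, zero_mul,
    mul_one, mul_neg, Finset.sum_ite_eq', Finset.mem_univ, if_true]
  ring

private lemma single_scaled (x : Fin (n + 2)) (c : R) :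
    (Pi.single x c : Fin (n+2) → R) = c • (Pi.single x 1 : Fin (n+2) → R) := by
  funext t
  simp [Pi.single_apply]

private lemma det_double_single (M : Matrix (Fin (n+2)) (Fin (n+2)) R) (c : R) :
    ((M.updateRow 0 (Pi.single 0 c)).updateRow (Fin.last (n+1))
        (Pi.single (Fin.last (n+1)) c)).det
      = c ^ 2 * (M.submatrix (fun i : Fin n => (i.succ).castSucc)
          (fun j : Fin n => (j.succ).castSucc)).det := by
  rw [single_scaled 0 c, single_scaled (Fin.last (n+1)) c, Matrix.det_updateRow_smul,
    updRow_comm zero_ne_last, Matrix.det_updateRow_smul, ← updRow_comm zero_ne_last]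
  have h4 : ((M.updateRow 0 (Pi.single 0 1)).updateRow (Fin.last (n+1))
      (Pi.single (Fin.last (n+1)) (1:R))).det
      = adjugate (M.updateRow 0 (Pi.single 0 1)) (Fin.last (n+1)) (Fin.last (n+1)) := by
    rw [Matrix.adjugate_apply]
  rw [h4, Matrix.adjugate_fin_succ_eq_det_submatrix]
  have h5 : ((-1 : R)) ^ (((Fin.last (n+1) : Fin (n+2)) : ℕ) + ((Fin.last (n+1) : Fin (n+2)) : ℕ))
      = 1 := Even.neg_one_pow ⟨n + 1, by simp [Fin.val_last]⟩
  rw [h5, one_mul, Fin.succAbove_last]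
  have h6 : ((M.updateRow 0 (Pi.single 0 1)).submatrix Fin.castSucc Fin.castSucc
      : Matrix (Fin (n+1)) (Fin (n+1)) R)
      = (M.submatrix Fin.castSucc Fin.castSucc).updateRow 0 (Pi.single 0 1) := by
    ext i j
    rcases eq_or_ne i 0 with rfl | hi
    · simp [Matrix.submatrix_apply, Fin.castSucc_zero, Matrix.updateRow_self,
        Pi.single_apply, Fin.castSucc_eq_zero_iff]
    · have hi' : (Fin.castSucc i) ≠ 0 := by
        simpa [Fin.castSucc_eq_zero_iff] using hi
      simp [Matrix.submatrix_apply, Matrix.updateRow_ne hi', Matrix.updateRow_ne hi]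
  rw [h6]
  have h7 : ((M.submatrix Fin.castSucc Fin.castSucc).updateRow 0 (Pi.single 0 1)).det
      = adjugate (M.submatrix Fin.castSucc Fin.castSucc) 0 0 := by
    rw [Matrix.adjugate_apply]
  rw [h7, Matrix.adjugate_fin_succ_eq_det_submatrix]
  simp only [Fin.val_zero, pow_zero, one_mul, Fin.succAbove_zero, Matrix.submatrix_submatrix]
  rw [sq]
  ring_nf
  rfl

private lemma bprime_mul (M : Matrix (Fin (n+2)) (Fin (n+2)) R) :
    (((1 : Matrix (Fin (n+2)) (Fin (n+2)) R).updateRow 0 (Matrix.adjugate M 0)).updateRow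
        (Fin.last (n+1)) (Matrix.adjugate M (Fin.last (n+1)))) * M
      = (M.updateRow 0 (Pi.single 0 M.det)).updateRow (Fin.last (n+1))
          (Pi.single (Fin.last (n+1)) M.det) := by
  ext i j
  rw [Matrix.mul_apply]
  rcases fin_trichotomy i with rfl | rfl | ⟨ji, rfl⟩
  · rw [Matrix.updateRow_ne zero_ne_last, Matrix.updateRow_self,
      Matrix.updateRow_ne zero_ne_last, Matrix.updateRow_self]
    have : ∑ k, Matrix.adjugate M 0 k * M k j = (Matrix.adjugate M * M) 0 j := by
      rw [Matrix.mul_apply]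
    rw [this, Matrix.adjugate_mul]
    simp [Matrix.one_apply, Pi.single_apply, eq_comm]
  · rw [Matrix.updateRow_self, Matrix.updateRow_self]
    have : ∑ k, Matrix.adjugate M (Fin.last (n+1)) k * M k j
        = (Matrix.adjugate M * M) (Fin.last (n+1)) j := by
      rw [Matrix.mul_apply]
    rw [this, Matrix.adjugate_mul]
    simp [Matrix.one_apply, Pi.single_apply, eq_comm]
  · rw [Matrix.updateRow_ne (mid_ne_last ji), Matrix.updateRow_ne (mid_ne_zero ji),
      Matrix.updateRow_ne (mid_ne_last ji), Matrix.updateRow_ne (mid_ne_zero ji)]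
    have : ∑ k, (1 : Matrix (Fin (n+2)) (Fin (n+2)) R) ((ji.castSucc).succ) k * M k j
        = ((1 : Matrix (Fin (n+2)) (Fin (n+2)) R) * M) ((ji.castSucc).succ) j := by
      rw [Matrix.mul_apply]
    rw [this, Matrix.one_mul]

private lemma dj_domain {S : Type*} [CommRing S] [IsDomain S]
    (M : Matrix (Fin (n+2)) (Fin (n+2)) S) (hdet : M.det ≠ 0) :
    M.det * (M.submatrix (fun i : Fin n => (i.succ).castSucc)
        (fun j : Fin n => (j.succ).castSucc)).det
      = (M.submatrix Fin.succ Fin.succ).det * (M.submatrix Fin.castSucc Fin.castSucc).det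
        - (M.submatrix Fin.castSucc Fin.succ).det * (M.submatrix Fin.succ Fin.castSucc).det := by
  have key := congrArg Matrix.det (bprime_mul (R := S) M)
  rw [Matrix.det_mul, det_corner_rows, det_double_single] at key
  -- key : (adj M 0 0 * adj M L L - adj M 0 L * adj M L 0) * det M = det M ^2 * inner
  have key2 : Matrix.adjugate M 0 0 * Matrix.adjugate M (Fin.last (n+1)) (Fin.last (n+1))
      - Matrix.adjugate M 0 (Fin.last (n+1)) * Matrix.adjugate M (Fin.last (n+1)) 0
      = M.det * (M.submatrix (fun i : Fin n => (i.succ).castSucc)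
          (fun j : Fin n => (j.succ).castSucc)).det := by
    apply mul_right_cancel₀ hdet
    rw [key]
    ring
  rw [Matrix.adjugate_fin_succ_eq_det_submatrix, Matrix.adjugate_fin_succ_eq_det_submatrix,
    Matrix.adjugate_fin_succ_eq_det_submatrix, Matrix.adjugate_fin_succ_eq_det_submatrix]
    at key2
  simp only [Fin.val_zero, Fin.val_last, Fin.succAbove_zero, Fin.succAbove_last,
    pow_zero, one_mul, add_zero, zero_add] at key2
  have h5 : ((-1 : S)) ^ (n+1) * ((-1 : S)) ^ (n+1) = 1 := by
    rw [← pow_add]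
    exact Even.neg_one_pow ⟨n + 1, rfl⟩
  have heven : ((-1 : S)) ^ (n + 1 + (n + 1)) = 1 := Even.neg_one_pow ⟨n + 1, rfl⟩
  rw [← key2]
  linear_combination (M.submatrix Fin.succ Fin.succ).det *
      (M.submatrix Fin.castSucc Fin.castSucc).det * heven -
    (M.submatrix Fin.castSucc Fin.succ).det * (M.submatrix Fin.succ Fin.castSucc).det * h5

theorem dj_general (M : Matrix (Fin (n+2)) (Fin (n+2)) R) :
    M.det * (M.submatrix (fun i : Fin n => (i.succ).castSucc)
        (fun j : Fin n => (j.succ).castSucc)).det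
      = (M.submatrix Fin.succ Fin.succ).det * (M.submatrix Fin.castSucc Fin.castSucc).det
        - (M.submatrix Fin.castSucc Fin.succ).det * (M.submatrix Fin.succ Fin.castSucc).det := by
  classical
  set X := Matrix.mvPolynomialX (Fin (n+2)) (Fin (n+2)) ℤ with hXdef
  have hX : X.det ≠ 0 := by
    rw [hXdef]
    exact Matrix.det_mvPolynomialX_ne_zero _ _
  have hgen := dj_domain X hX
  let φ : MvPolynomial (Fin (n+2) × Fin (n+2)) ℤ →+* R :=
    MvPolynomial.eval₂Hom (Int.castRingHom R) fun p => M p.1 p.2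
  have hmap : X.map ⇑φ = M := by
    have h : ⇑φ = MvPolynomial.eval₂ (Int.castRingHom R) (fun p => M p.1 p.2) := rfl
    rw [h, hXdef]
    exact Matrix.mvPolynomialX_map_eval₂ _ M
  have h0 : φ X.det = M.det := by
    rw [RingHom.map_det, show φ.mapMatrix X = X.map ⇑φ from rfl, hmap]
  have hsub : ∀ {m : ℕ} (f g : Fin m → Fin (n+2)), φ ((X.submatrix f g).det)
      = ((M.submatrix f g).det) := by
    intro m f g
    rw [RingHom.map_det, show φ.mapMatrix (X.submatrix f g) = (X.map ⇑φ).submatrix f g from rfl,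
      hmap]
  have hthis := congrArg φ hgen
  simp only [_root_.map_mul, _root_.map_sub] at hthis
  rw [h0, hsub, hsub, hsub, hsub, hsub] at hthis
  exact hthis

/-- Hankel-type square matrix with entries `C(c, b - i - j)`. -/
def gMat (c d : ℕ) (b : ℤ) : Matrix (Fin d) (Fin d) ℤ :=
  Matrix.of fun i j => binomZ c (b - (i : ℕ) - (j : ℕ))

def gdet (c d : ℕ) (b : ℤ) : ℤ := (gMat c d b).det

lemma binomZ_neg {c : ℕ} {k : ℤ} (h : k < 0) : binomZ c k = 0 := by
  rw [binomZ, if_neg (by omega)]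

lemma binomZ_big {c : ℕ} {k : ℤ} (h : (c : ℤ) < k) : binomZ c k = 0 := by
  rw [binomZ, if_pos (by omega)]
  have : c < k.toNat := by omega
  rw [Nat.choose_eq_zero_of_lt this, Nat.cast_zero]

lemma binomZ_nonneg_eq (c : ℕ) (a : ℕ) : binomZ c (a : ℤ) = (c.choose a : ℤ) := by
  rw [binomZ, if_pos (by positivity)]
  simp

lemma gdet_zero : gdet c 0 b = 1 := Matrix.det_isEmpty

lemma gdet_one (c : ℕ) (b : ℤ) : gdet c 1 b = binomZ c b := by
  rw [gdet, Matrix.det_fin_one]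
  simp [gMat]

lemma gdet_low (c d : ℕ) (hd : 0 < d) (b : ℤ) (hb : b < (d : ℤ) - 1) : gdet c d b = 0 := by
  apply Matrix.det_eq_zero_of_row_eq_zero ⟨d - 1, by omega⟩
  intro j
  apply binomZ_neg
  have hj : (j : ℤ) ≥ 0 := by positivity
  simp only [Fin.val_mk]
  omega

lemma gdet_high (c d : ℕ) (hd : 0 < d) (b : ℤ) (hb : (c : ℤ) + d - 1 < b) : gdet c d b = 0 := by
  apply Matrix.det_eq_zero_of_row_eq_zero ⟨0, hd⟩
  intro j
  apply binomZ_big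
  have hj : (j : ℤ) ≤ (d : ℤ) - 1 := by
    have := j.isLt
    omega
  simp only [Fin.val_mk, Nat.cast_zero]
  omega

lemma gdet_rec (c d : ℕ) (b : ℤ) :
    gdet c (d+2) b * gdet c d (b-2)
      = gdet c (d+1) (b-2) * gdet c (d+1) b - gdet c (d+1) (b-1) * gdet c (d+1) (b-1) := by
  have h := dj_general (R := ℤ) (n := d) (gMat c (d+2) b)
  have e1 : (gMat c (d+2) b).submatrix (fun i : Fin d => (i.succ).castSucc)
      (fun j : Fin d => (j.succ).castSucc) = gMat c d (b-2) := by
    ext i j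
    simp only [Matrix.submatrix_apply, gMat, Matrix.of_apply]
    congr 1
    push_cast [Fin.coe_castSucc, Fin.val_succ]
    ring
  have e2 : (gMat c (d+2) b).submatrix Fin.succ Fin.succ = gMat c (d+1) (b-2) := by
    ext i j
    simp only [Matrix.submatrix_apply, gMat, Matrix.of_apply]
    congr 1
    push_cast [Fin.val_succ]
    ring
  have e3 : (gMat c (d+2) b).submatrix Fin.castSucc Fin.castSucc = gMat c (d+1) b := by
    ext i j
    simp only [Matrix.submatrix_apply, gMat, Matrix.of_apply]
    congr 1
  have e4 : (gMat c (d+2) b).submatrix Fin.castSucc Fin.succ = gMat c (d+1) (b-1) := by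
    ext i j
    simp only [Matrix.submatrix_apply, gMat, Matrix.of_apply]
    congr 1
    push_cast [Fin.coe_castSucc, Fin.val_succ]
    ring
  have e5 : (gMat c (d+2) b).submatrix Fin.succ Fin.castSucc = gMat c (d+1) (b-1) := by
    ext i j
    simp only [Matrix.submatrix_apply, gMat, Matrix.of_apply]
    congr 1
    push_cast [Fin.coe_castSucc, Fin.val_succ]
    ring
  rw [e1, e2, e3, e4, e5] at h
  rw [gdet, gdet, gdet, gdet, gdet]
  linarith [h]

def Pfac (d x : ℕ) : ℚ := ∏ i ∈ Finset.range d, ((x + i).factorial : ℚ)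

def Qfac (d : ℕ) : ℚ := ∏ i ∈ Finset.range d, (i.factorial : ℚ)

noncomputable def Fq (d a e : ℕ) : ℚ := Qfac d * Pfac d (a + e) / (Pfac d a * Pfac d e)

lemma Pfac_pos (d x : ℕ) : 0 < Pfac d x :=
  Finset.prod_pos fun i _ => by positivity

lemma Qfac_pos (d : ℕ) : 0 < Qfac d :=
  Finset.prod_pos fun i _ => by positivity

lemma Fq_pos (d a e : ℕ) : 0 < Fq d a e := by
  rw [Fq]
  have := Pfac_pos d (a+e); have := Pfac_pos d a; have := Pfac_pos d e; have := Qfac_pos d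
  positivity

lemma Pfac_succ (d x : ℕ) : Pfac (d+1) x = Pfac d x * ((x + d).factorial : ℚ) :=
  Finset.prod_range_succ _ _

lemma Qfac_succ (d : ℕ) : Qfac (d+1) = Qfac d * (d.factorial : ℚ) :=
  Finset.prod_range_succ _ _

lemma Pfac_zero_eq_Qfac (d : ℕ) : Pfac d 0 = Qfac d := by
  unfold Pfac Qfac
  exact Finset.prod_congr rfl fun i _ => by rw [Nat.zero_add]

lemma Fq_a_zero (d e : ℕ) : Fq d 0 e = 1 := by
  have h : Qfac d * Pfac d e ≠ 0 := by
    have := Qfac_pos d; have := Pfac_pos d e; positivity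
  rw [Fq, Pfac_zero_eq_Qfac, Nat.zero_add, div_self h]

lemma Fq_e_zero (d a : ℕ) : Fq d a 0 = 1 := by
  have h : Qfac d * Pfac d a ≠ 0 := by
    have := Qfac_pos d; have := Pfac_pos d a; positivity
  rw [Fq, Pfac_zero_eq_Qfac, Nat.add_zero, mul_comm (Pfac d a) (Qfac d), div_self h]

lemma Pkey (x : ℕ) : ∀ d : ℕ,
    Pfac d (x+1) ^ 2 * ((x : ℚ) + 1 + d) = Pfac d x * Pfac d (x+2) * ((x : ℚ) + 1) := by
  intro d
  induction d with
  | zero => simp [Pfac]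
  | succ d ih =>
    have hfac1 : (((x + 1 + d).factorial : ℚ)) = ((x : ℚ) + 1 + d) * ((x + d).factorial : ℚ) := by
      have h : x + 1 + d = (x + d) + 1 := by ring
      rw [h, Nat.factorial_succ]
      push_cast
      ring
    have hfac2 : (((x + 2 + d).factorial : ℚ))
        = ((x : ℚ) + 2 + d) * ((x : ℚ) + 1 + d) * ((x + d).factorial : ℚ) := by
      have h : x + 2 + d = ((x + d) + 1) + 1 := by ring
      rw [h, Nat.factorial_succ, Nat.factorial_succ]
      push_cast
      ring
    have hxd : ((x : ℚ) + 1 + d) ≠ 0 := by positivity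
    apply mul_right_cancel₀ hxd
    rw [Pfac_succ, Pfac_succ, Pfac_succ, hfac1, hfac2]
    push_cast
    linear_combination (((x:ℚ)+1+d)^2 * ((x+d).factorial:ℚ)^2 * ((x:ℚ)+2+d)) * ih

lemma FqL1 (a e d : ℕ) :
    Fq d a (e+2) * Fq d (a+2) e * (((a : ℚ) + 1 + d) * ((e : ℚ) + 1 + d))
      = Fq d (a+1) (e+1) ^ 2 * (((a : ℚ) + 1) * ((e : ℚ) + 1)) := by
  have ka := Pkey a d
  have ke := Pkey e d
  have kae : (Pfac d (a+1) ^ 2 * ((a:ℚ)+1+d)) * (Pfac d (e+1) ^ 2 * ((e:ℚ)+1+d))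
      = (Pfac d a * Pfac d (a+2) * ((a:ℚ)+1)) * (Pfac d e * Pfac d (e+2) * ((e:ℚ)+1)) := by
    rw [ka, ke]
  have h1 : a + (e+2) = (a+1) + (e+1) := by ring
  have h2 : (a+2) + e = (a+1) + (e+1) := by ring
  rw [Fq, Fq, Fq, h1, h2]
  have n1 : Pfac d a ≠ 0 := (Pfac_pos d a).ne'
  have n2 : Pfac d (e+2) ≠ 0 := (Pfac_pos d (e+2)).ne'
  have n3 : Pfac d (a+2) ≠ 0 := (Pfac_pos d (a+2)).ne'
  have n4 : Pfac d e ≠ 0 := (Pfac_pos d e).ne'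
  have n5 : Pfac d (a+1) ≠ 0 := (Pfac_pos d (a+1)).ne'
  have n6 : Pfac d (e+1) ≠ 0 := (Pfac_pos d (e+1)).ne'
  field_simp
  linear_combination (Qfac d)^2 * (Pfac d ((a+1)+(e+1)))^2 * kae

lemma FqL2 (a e d : ℕ) :
    Fq (d+2) a e * Fq d a e * (((a : ℚ) + d + 1) * ((e : ℚ) + d + 1))
      = Fq (d+1) a e ^ 2 * (((d : ℚ) + 1) * ((a : ℚ) + e + d + 1)) := by
  have hfa : (((a + (d+1)).factorial : ℚ)) = ((a : ℚ) + d + 1) * ((a + d).factorial : ℚ) := by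
    have h : a + (d+1) = (a + d) + 1 := by ring
    rw [h, Nat.factorial_succ]; push_cast; ring
  have hfe : (((e + (d+1)).factorial : ℚ)) = ((e : ℚ) + d + 1) * ((e + d).factorial : ℚ) := by
    have h : e + (d+1) = (e + d) + 1 := by ring
    rw [h, Nat.factorial_succ]; push_cast; ring
  have hfc : (((a + e + (d+1)).factorial : ℚ))
      = ((a : ℚ) + e + d + 1) * ((a + e + d).factorial : ℚ) := by
    have h : a + e + (d+1) = (a + e + d) + 1 := by ring
    rw [h, Nat.factorial_succ]; push_cast; ring
  have hfd : (((d + 1).factorial : ℚ)) = ((d : ℚ) + 1) * (d.factorial : ℚ) := by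
    rw [Nat.factorial_succ]; push_cast; ring
  rw [Fq, Fq, Fq, Pfac_succ, Pfac_succ, Pfac_succ, Pfac_succ, Pfac_succ, Pfac_succ,
    Qfac_succ, Qfac_succ, hfa, hfe, hfc, hfd]
  have n1 : Pfac d a ≠ 0 := (Pfac_pos d a).ne'
  have n4 : Pfac d e ≠ 0 := (Pfac_pos d e).ne'
  have f1 : ((a+d).factorial : ℚ) ≠ 0 := by positivity
  have f2 : ((e+d).factorial : ℚ) ≠ 0 := by positivity
  field_simp

lemma sign_rec (d : ℕ) :
    ((-1:ℚ))^((d+2)*((d+2)-1)/2) * ((-1:ℚ))^(d*(d-1)/2)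
      = -(((-1:ℚ))^((d+1)*((d+1)-1)/2) * ((-1:ℚ))^((d+1)*((d+1)-1)/2)) := by
  have e0 : d*(d-1)/2 = d.choose 2 := (Nat.choose_two_right d).symm
  have e1 : (d+1)*((d+1)-1)/2 = (d+1).choose 2 := by
    rw [Nat.choose_two_right]
  have e2 : (d+2)*((d+2)-1)/2 = (d+2).choose 2 := by
    rw [Nat.choose_two_right]
  rw [e0, e1, e2]
  have hp : (d+2).choose 2 = (d+1) + (d+1).choose 2 := by
    rw [Nat.choose_succ_succ, Nat.choose_one_right]
  have hq : (d+1).choose 2 = d + d.choose 2 := by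
    rw [Nat.choose_succ_succ, Nat.choose_one_right]
  rw [hp, hq]
  generalize d.choose 2 = t
  rw [← pow_add, ← pow_add]
  have hL : ((-1:ℚ))^((d + 1 + (d + t)) + t) = -1 := Odd.neg_one_pow ⟨d + t, by ring⟩
  have hR : ((-1:ℚ))^((d + t) + (d + t)) = 1 := Even.neg_one_pow ⟨d + t, rfl⟩
  rw [hL, hR]

lemma sq_sign (k : ℕ) : ((-1:ℚ))^k * ((-1:ℚ))^k = 1 := by
  rw [← pow_add]
  exact Even.neg_one_pow ⟨k, rfl⟩

lemma gdet_eval (c : ℕ) : ∀ d a e : ℕ, a + e = c →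
    ((gdet c d ((a : ℤ) + d - 1) : ℤ) : ℚ) = (-1)^(d*(d-1)/2) * Fq d a e := by
  intro d
  induction d using Nat.strong_induction_on with
  | _ d ih =>
    match d with
    | 0 =>
      intro a e hae
      have h0 : gdet c 0 ((a : ℤ) + (0:ℕ) - 1) = 1 := Matrix.det_isEmpty
      rw [h0]
      norm_num [Fq, Pfac, Qfac]
    | 1 =>
      intro a e hae
      have harg : (a : ℤ) + (1:ℕ) - 1 = (a : ℤ) := by push_cast; ring
      rw [harg, gdet_one, binomZ_nonneg_eq]
      have hc : (c.choose a : ℚ) = (c.factorial : ℚ) / (a.factorial * (c-a).factorial) :=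
        Nat.cast_choose ℚ (by omega)
      have hce : c - a = e := by omega
      rw [hce] at hc
      push_cast
      rw [hc]
      have : Fq 1 a e = ((a+e).factorial : ℚ) / ((a.factorial : ℚ) * (e.factorial : ℚ)) := by
        simp [Fq, Pfac, Qfac]
      rw [this, hae]
      ring
    | (d+2) =>
      intro a e hae
      set b : ℤ := (a : ℤ) + (d+2) - 1 with hbdef
      have hrec := gdet_rec c d b
      have I1 : ((gdet c d (b-2) : ℤ) : ℚ) = (-1)^(d*(d-1)/2) * Fq d a e := by
        rw [show b - 2 = (a:ℤ) + d - 1 by rw [hbdef]; push_cast; ring]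
        exact ih d (by omega) a e hae
      have I2 : ((gdet c (d+1) (b-1) : ℤ) : ℚ) = (-1)^((d+1)*((d+1)-1)/2) * Fq (d+1) a e := by
        rw [show b - 1 = (a:ℤ) + (d+1) - 1 by rw [hbdef]; push_cast; ring]
        exact ih (d+1) (by omega) a e hae
      have hrecQ := congrArg (Int.cast : ℤ → ℚ) hrec
      push_cast at hrecQ
      rw [I1, I2] at hrecQ
      rcases Nat.eq_zero_or_pos a with rfl | hapos
      · -- a = 0 : left cross factor vanishes
        have I4 : ((gdet c (d+1) (b-2) : ℤ) : ℚ) = 0 := by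
          rw [show b - 2 = (d:ℤ) - 1 by rw [hbdef]; push_cast; ring]
          rw [gdet_low c (d+1) (by omega) _ (by push_cast; omega)]
          norm_num
        rw [I4, Fq_a_zero, Fq_a_zero] at hrecQ
        rw [Fq_a_zero]
        have hs := sign_rec d
        have hsq := sq_sign (d*(d-1)/2)
        have hG := hrecQ
        have hfin : ((gdet c (d+2) b : ℤ) : ℚ) = (-1)^((d+2)*((d+2)-1)/2) := by
          have h1 : ((gdet c (d+2) b : ℤ) : ℚ) * ((-1:ℚ)^(d*(d-1)/2) * (-1:ℚ)^(d*(d-1)/2))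
              = (-1:ℚ)^((d+2)*((d+2)-1)/2) * ((-1:ℚ)^(d*(d-1)/2) * (-1:ℚ)^(d*(d-1)/2)) := by
            linear_combination ((-1:ℚ)^(d*(d-1)/2)) * hG - ((-1:ℚ)^(d*(d-1)/2)) * hs
          rw [hsq, mul_one, mul_one] at h1
          exact h1
        rw [show ((0:ℕ) : ℤ) + ((d+2:ℕ) : ℤ) - 1 = b by rw [hbdef]; push_cast; ring]
        rw [hfin, mul_one]
      rcases Nat.eq_zero_or_pos e with rfl | hepos
      · -- e = 0 : right cross factor vanishes
        have I3 : ((gdet c (d+1) b : ℤ) : ℚ) = 0 := by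
          rw [gdet_high c (d+1) (by omega) _ (by rw [hbdef]; push_cast; omega)]
          norm_num
        rw [I3, Fq_e_zero, Fq_e_zero] at hrecQ
        rw [Fq_e_zero]
        have hs := sign_rec d
        have hsq := sq_sign (d*(d-1)/2)
        have hG := hrecQ
        have hfin : ((gdet c (d+2) b : ℤ) : ℚ) = (-1)^((d+2)*((d+2)-1)/2) := by
          have h1 : ((gdet c (d+2) b : ℤ) : ℚ) * ((-1:ℚ)^(d*(d-1)/2) * (-1:ℚ)^(d*(d-1)/2))
              = (-1:ℚ)^((d+2)*((d+2)-1)/2) * ((-1:ℚ)^(d*(d-1)/2) * (-1:ℚ)^(d*(d-1)/2)) := by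
            linear_combination ((-1:ℚ)^(d*(d-1)/2)) * hG - ((-1:ℚ)^(d*(d-1)/2)) * hs
          rw [hsq, mul_one, mul_one] at h1
          exact h1
        rw [show ((a:ℕ) : ℤ) + ((d+2:ℕ) : ℤ) - 1 = b by rw [hbdef]; push_cast; ring]
        rw [hfin, mul_one]
      · -- main case : a = a'+1, e = e'+1
        obtain ⟨a', rfl⟩ : ∃ a', a = a' + 1 := ⟨a - 1, by omega⟩
        obtain ⟨e', rfl⟩ : ∃ e', e = e' + 1 := ⟨e - 1, by omega⟩
        have I3 : ((gdet c (d+1) b : ℤ) : ℚ)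
            = (-1)^((d+1)*((d+1)-1)/2) * Fq (d+1) (a'+2) e' := by
          rw [show b = (((a'+2 : ℕ)) : ℤ) + (d+1) - 1 by rw [hbdef]; push_cast; ring]
          exact ih (d+1) (by omega) (a'+2) e' (by omega)
        have I4 : ((gdet c (d+1) (b-2) : ℤ) : ℚ)
            = (-1)^((d+1)*((d+1)-1)/2) * Fq (d+1) a' (e'+2) := by
          rw [show b - 2 = ((a' : ℕ) : ℤ) + (d+1) - 1 by rw [hbdef]; push_cast; ring]
          exact ih (d+1) (by omega) a' (e'+2) (by omega)
        rw [I3, I4] at hrecQ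
        have hs := sign_rec d
        have hsq := sq_sign (d*(d-1)/2)
        have hsq1 := sq_sign ((d+1)*((d+1)-1)/2)
        have L1 := FqL1 a' e' (d+1)
        have L2 := FqL2 (a'+1) (e'+1) d
        have hF : Fq d (a'+1) (e'+1) ≠ 0 := (Fq_pos _ _ _).ne'
        have hαβ : (((a' : ℚ)+1) + d + 1) * (((e' : ℚ)+1) + d + 1) ≠ 0 := by positivity
        have key : ((gdet c (d+2) b : ℤ) : ℚ)
              * (((-1:ℚ)^(d*(d-1)/2) * Fq d (a'+1) (e'+1))
                * ((((a' : ℚ)+1) + d + 1) * (((e' : ℚ)+1) + d + 1)))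
            = ((-1:ℚ)^((d+2)*((d+2)-1)/2) * Fq (d+2) (a'+1) (e'+1))
              * (((-1:ℚ)^(d*(d-1)/2) * Fq d (a'+1) (e'+1))
                * ((((a' : ℚ)+1) + d + 1) * (((e' : ℚ)+1) + d + 1))) := by
          push_cast at L1 L2 hs hrecQ ⊢
          linear_combination ((((a' : ℚ)+1) + d + 1) * (((e' : ℚ)+1) + d + 1)) * hrecQ
            + ((-1:ℚ)^((d+1)*d/2) * (-1:ℚ)^((d+1)*d/2)) * L1
            + ((-1:ℚ)^((d+1)*d/2) * (-1:ℚ)^((d+1)*d/2)) * L2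
            - (Fq (d+2) (a'+1) (e'+1) * Fq d (a'+1) (e'+1)
                * ((((a' : ℚ)+1) + d + 1) * (((e' : ℚ)+1) + d + 1))) * hs
        have hne : (((-1:ℚ)^(d*(d-1)/2) * Fq d (a'+1) (e'+1))
            * ((((a' : ℚ)+1) + d + 1) * (((e' : ℚ)+1) + d + 1))) ≠ 0 := by
          apply mul_ne_zero (mul_ne_zero ?_ hF) hαβ
          intro h
          have := sq_sign (d*(d-1)/2)
          rw [h] at this
          norm_num at this
        exact mul_right_cancel₀ hne key

end Aux

/-- Explicit evaluation of the minor `q_0(m,n,d)`. -/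
theorem q_zero_eval (m n d : ℕ) (hd : 0 < d) (hdm : d < m) (hdn : d < n) :
    ((qMinor m n d 0 : ℤ) : ℚ) =
      (-1) ^ (d * (d - 1) / 2) *
        ∏ i ∈ Finset.range d,
          ((i.factorial : ℚ) * ((m + n - 2 * d - 1 + i).factorial : ℚ)) /
            (((m - i - 2).factorial : ℚ) * ((n - i - 1).factorial : ℚ)) := by
  set c := m + n - 2 * d - 1 with hc
  set a := m - d - 1 with ha
  set e := n - d with he
  have hae : a + e = c := by omega
  have h1 : qMinor m n d 0 = gdet c d ((m:ℤ) - 2) := by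
    rw [qMinor, gdet]
    congr 1
    ext i j
    simp only [Matrix.submatrix_apply, id_eq, hankelH, gMat, Matrix.of_apply]
    rw [show (0 : Fin (d+1)).succAbove j = j.succ from by rw [Fin.succAbove_zero]]
    congr 1
    push_cast [Fin.val_succ]
    ring
  have harg : ((a:ℕ):ℤ) + (d:ℤ) - 1 = (m:ℤ) - 2 := by omega
  rw [h1, ← harg, gdet_eval c d a e hae]
  congr 1
  rw [Fq, Finset.prod_div_distrib, Finset.prod_mul_distrib, Finset.prod_mul_distrib]
  have hQ : ∏ i ∈ Finset.range d, ((i.factorial : ℚ)) = Qfac d := rfl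
  have hPc : ∏ i ∈ Finset.range d, (((c + i).factorial : ℚ)) = Pfac d (a+e) := by
    rw [hae]
    rfl
  have hPa : ∏ i ∈ Finset.range d, (((m - i - 2).factorial : ℚ)) = Pfac d a := by
    rw [← Finset.prod_range_reflect (fun i => (((m - i - 2).factorial : ℚ))) d]
    apply Finset.prod_congr rfl
    intro i hi
    have hi' : i < d := Finset.mem_range.mp hi
    congr 2
    omega
  have hPe : ∏ i ∈ Finset.range d, (((n - i - 1).factorial : ℚ)) = Pfac d e := by
    rw [← Finset.prod_range_reflect (fun i => (((n - i - 1).factorial : ℚ))) d]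
    apply Finset.prod_congr rfl
    intro i hi
    have hi' : i < d := Finset.mem_range.mp hi
    congr 2
    omega
  rw [hQ, hPc, hPa, hPe]
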